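/- arXiv:0704.3421 — 2 statements merged into one kernel-verified Lean document; each statement's English description precedes it below -/
import Mathlib

section
/- (Wakamatsu's Lemma) If 𝔅 is closed under extensions and φ: B → M is a surjective 𝔅-cover, then Ext^1_R(X, ker φ) = 0 for all X in 𝔅. -/
open CategoryTheory Opposite TensorProduct

open CategoryTheory.Limits

universe u

noncomputable section

/-- `Ext^i_R(M, N) = 0`. -/
def ExtVanishes (R : Type u) [CommRing R] (M N : ModuleCat.{u} R) (i : ℕ) : Prop :=
  Subsingleton (((Ext R (ModuleCat.{u} R) i).obj (op M)).obj N)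

/-- `Tor_i^R(M, N) = 0`. -/
def TorVanishes (R : Type u) [CommRing R] (M N : ModuleCat.{u} R) (i : ℕ) : Prop :=
  Subsingleton (((Tor (ModuleCat.{u} R) i).obj M).obj N)

/-- `φ : B ⟶ M` is a `𝔅`-precover of `M`: `B ∈ 𝔅` and every map from a module in `𝔅`
to `M` factors through `φ`. -/
def IsPrecover (R : Type u) [CommRing R] (𝔅 : Set (ModuleCat.{u} R))
    {B M : ModuleCat.{u} R} (φ : B ⟶ M) : Prop :=
  B ∈ 𝔅 ∧ ∀ X ∈ 𝔅, ∀ g : X ⟶ M, ∃ h : X ⟶ B, h ≫ φ = g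

/-- A `𝔅`-precover `φ` is a `𝔅`-cover if every endomorphism `γ` of its source with
`φ ∘ γ = φ` is an automorphism. -/
def IsCover (R : Type u) [CommRing R] (𝔅 : Set (ModuleCat.{u} R))
    {B M : ModuleCat.{u} R} (φ : B ⟶ M) : Prop :=
  IsPrecover R 𝔅 φ ∧ ∀ γ : B ⟶ B, γ ≫ φ = φ → Function.Bijective γ

/-- `𝔅` is closed under extensions. -/
def ClosedUnderExtensions (R : Type u) [CommRing R] (𝔅 : Set (ModuleCat.{u} R)) : Prop :=
  ∀ (A X C : ModuleCat.{u} R) (f : A ⟶ X) (g : X ⟶ C),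
    Function.Injective f → Function.Surjective g → LinearMap.range f.hom = LinearMap.ker g.hom →
    A ∈ 𝔅 → C ∈ 𝔅 → X ∈ 𝔅

set_option linter.unnecessarySimpa false in
lemma wakamatsu_lift
    (R : Type u) [CommRing R]
    (𝔅 : Set (ModuleCat.{u} R))
    (hext : ClosedUnderExtensions R 𝔅)
    {B M : ModuleCat.{u} R} (φ : B ⟶ M)
    (hcov : IsCover R 𝔅 φ)
    {X : ModuleCat.{u} R} (hX : X ∈ 𝔅)
    (P : ModuleCat.{u} R) (π : P ⟶ X) (hπ : Function.Surjective π)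
    (f : ↥(LinearMap.ker π.hom) →ₗ[R] ↥(LinearMap.ker φ.hom)) :
    ∃ v : P →ₗ[R] ↥(LinearMap.ker φ.hom),
      ∀ ω : ↥(LinearMap.ker π.hom), v ω.1 = f ω := by
  classical
  let g : ↥(LinearMap.ker π.hom) →ₗ[R] B := ((LinearMap.ker φ.hom).subtype).comp f
  have hφg : ∀ ω, φ (g ω) = 0 := fun ω => (f ω).2
  let s : ↥(LinearMap.ker π.hom) →ₗ[R] B × P :=
    LinearMap.prod g (-((LinearMap.ker π.hom).subtype))
  let N : Submodule R (B × P) := LinearMap.range s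
  let Y : ModuleCat.{u} R := ModuleCat.of R ((B × P) ⧸ N)
  let jB : B ⟶ Y := ModuleCat.ofHom (N.mkQ.comp (LinearMap.inl R B P))
  let jP : P →ₗ[R] ((B × P) ⧸ N) := N.mkQ.comp (LinearMap.inr R B P)
  have hjB : ∀ b : B, jB b = N.mkQ (b, 0) := fun b => rfl
  have hjP : ∀ p : P, jP p = N.mkQ (0, p) := fun p => rfl
  have hs : ∀ ω, s ω = (g ω, -(ω : P)) := fun ω => rfl
  -- the quotient map to X
  have hNq : N ≤ LinearMap.ker (π.hom.comp (LinearMap.snd R B P)) := by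
    rintro x ⟨ω, rfl⟩
    show π (s ω).2 = 0
    rw [hs]
    show π (-(ω : P)) = 0
    rw [map_neg]
    simpa using ω.2
  let q : Y ⟶ X := ModuleCat.ofHom (N.liftQ _ hNq)
  have hq : ∀ x : B × P, q (N.mkQ x) = π x.2 := fun x => rfl
  have hqsurj : Function.Surjective q := by
    intro x
    obtain ⟨p, rfl⟩ := hπ x
    exact ⟨N.mkQ (0, p), hq _⟩
  have hjBinj : Function.Injective jB := by
    intro b b' hbb
    rw [hjB, hjB, Submodule.mkQ_apply, Submodule.mkQ_apply, Submodule.Quotient.eq] at hbb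
    obtain ⟨ω, hω⟩ := hbb
    have h2 : -(ω : P) = (0 : P) - 0 := congrArg Prod.snd hω
    rw [sub_zero] at h2
    have hω0 : ω = 0 := Subtype.ext (neg_eq_zero.1 h2)
    have h1 : g ω = b - b' := congrArg Prod.fst hω
    rw [hω0, map_zero] at h1
    exact sub_eq_zero.1 h1.symm
  have hrk : LinearMap.range jB.hom = LinearMap.ker q.hom := by
    apply le_antisymm
    · rintro _ ⟨b, rfl⟩
      show q (jB b) = 0
      rw [hjB, hq]
      exact map_zero π.hom
    · rintro y hy
      obtain ⟨⟨b, p⟩, rfl⟩ := Submodule.mkQ_surjective N y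
      have hp : π p = 0 := hy
      set ω : ↥(LinearMap.ker π.hom) := ⟨p, hp⟩ with hωdef
      refine ⟨b + g ω, ?_⟩
      rw [hjB, Submodule.mkQ_apply, Submodule.mkQ_apply, Submodule.Quotient.eq]
      refine ⟨ω, ?_⟩
      rw [hs]
      ext
      · show g ω = b + g ω - b
        rw [add_sub_cancel_left]
      · show -(ω : P) = (0 : P) - p
        rw [zero_sub]
  have hY : Y ∈ 𝔅 := hext B Y X jB q hjBinj hqsurj hrk hcov.1.1 hX
  -- map to M
  have hNψ : N ≤ LinearMap.ker (φ.hom.comp (LinearMap.fst R B P)) := by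
    rintro x ⟨ω, rfl⟩
    show φ (s ω).1 = 0
    rw [hs]
    exact hφg ω
  let ψ : Y ⟶ M := ModuleCat.ofHom (N.liftQ _ hNψ)
  have hψ : ∀ x : B × P, ψ (N.mkQ x) = φ x.1 := fun x => rfl
  obtain ⟨h, hh⟩ := hcov.1.2 Y hY ψ
  have hhpt : ∀ y : Y, φ (h y) = ψ y := fun y => LinearMap.congr_fun (congrArg ModuleCat.Hom.hom hh) y
  let γ : B ⟶ B := jB ≫ h
  have hγdef : ∀ b, γ b = h (jB b) := fun b => rfl
  have hγφ : γ ≫ φ = φ := by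
    ext b
    show φ (h (jB b)) = φ b
    rw [hhpt, hjB, hψ]
  have hbij := hcov.2 γ hγφ
  have hγpt : ∀ b, φ (γ b) = φ b := fun b => LinearMap.congr_fun (congrArg ModuleCat.Hom.hom hγφ) b
  let e : B ≃ₗ[R] B := LinearEquiv.ofBijective γ.hom hbij
  have hecoe : ∀ b, e b = γ b := fun b => rfl
  have hesymm : ∀ b, φ (e.symm b) = φ b := by
    intro b
    have h1 := hγpt (e.symm b)
    rw [← hecoe, e.apply_symm_apply] at h1
    exact h1.symm
  let ρ : P →ₗ[R] B := (e.symm.toLinearMap).comp (h.hom.comp jP)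
  have hρdef : ∀ p, ρ p = e.symm (h (jP p)) := fun p => rfl
  have hρK : ∀ p, ρ p ∈ LinearMap.ker φ.hom := by
    intro p
    show φ (ρ p) = 0
    rw [hρdef, hesymm, hhpt, hjP, hψ]
    exact map_zero φ.hom
  refine ⟨LinearMap.codRestrict _ ρ hρK, ?_⟩
  intro ω
  apply Subtype.ext
  rw [LinearMap.codRestrict_apply]
  show ρ (ω : P) = ((f ω : ↥(LinearMap.ker φ.hom)) : B)
  have hjPω : jP (ω : P) = jB (g ω) := by
    rw [hjP, hjB, Submodule.mkQ_apply, Submodule.mkQ_apply, Submodule.Quotient.eq]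
    refine ⟨-ω, ?_⟩
    rw [map_neg, hs]
    ext
    · show -(g ω) = (0 : B) - g ω
      rw [zero_sub]
    · show -(-(ω : P)) = (ω : P) - 0
      rw [sub_zero, neg_neg]
  rw [hρdef, hjPω, ← hγdef, ← hecoe, e.symm_apply_apply]
  rfl

/-- Wakamatsu's lemma: if `𝔅` is closed under extensions and `φ : B ⟶ M` is a
surjective `𝔅`-cover, then `Ext¹(X, ker φ) = 0` for every `X ∈ 𝔅`. -/
theorem wakamatsu
    (R : Type u) [CommRing R] [IsNoetherianRing R]
    (𝔅 : Set (ModuleCat.{u} R)) (hfg : ∀ B ∈ 𝔅, Module.Finite R B)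
    (hext : ClosedUnderExtensions R 𝔅)
    {B M : ModuleCat.{u} R} (φ : B ⟶ M) (hsurj : Function.Surjective φ)
    (hcov : IsCover R 𝔅 φ) :
    ∀ X ∈ 𝔅, ExtVanishes R X (ModuleCat.of R ↥(LinearMap.ker φ.hom)) 1 := by
  intro X hX
  let K : ModuleCat.{u} R := ModuleCat.of R ↥(LinearMap.ker φ.hom)
  let P : ProjectiveResolution X := (HasProjectiveResolution.out (Z := X)).some
  let C := P.complex.linearYonedaObj R K
  have hexact : C.ExactAt 1 := by
    rw [HomologicalComplex.exactAt_iff' C 0 1 2 (by simp) (by simp),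
        ShortComplex.moduleCat_exact_iff]
    intro u₀ hu
    let u : P.complex.X 1 ⟶ K := u₀
    have hu' : P.complex.d 2 1 ≫ u = 0 := hu
    have hupt : ∀ y, u (P.complex.d 2 1 y) = 0 := fun y => LinearMap.congr_fun (congrArg ModuleCat.Hom.hom hu') y
    -- exactness facts
    have hrange0 : LinearMap.range (P.complex.d 1 0).hom = LinearMap.ker (P.π.f 0).hom :=
      (ShortComplex.moduleCat_exact_iff_range_eq_ker _).1 P.exact₀
    have hrange1 : LinearMap.range (P.complex.d 2 1).hom = LinearMap.ker (P.complex.d 1 0).hom :=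
      (ShortComplex.moduleCat_exact_iff_range_eq_ker _).1 (P.exact_succ 0)
    have hπs : Function.Surjective (P.π.f 0) :=
      (ModuleCat.epi_iff_surjective (P.π.f 0)).1 inferInstance
    -- descend u to ker (π.f 0)
    have hkerle : LinearMap.ker (P.complex.d 1 0).hom ≤
        LinearMap.ker u.hom := by
      intro x hx
      rw [← hrange1] at hx
      obtain ⟨y, rfl⟩ := hx
      exact hupt y
    let ubar := (LinearMap.ker (P.complex.d 1 0).hom).liftQ
        u.hom hkerle
    let eqr := (P.complex.d 1 0).hom.quotKerEquivRange
    let inc : ↥(LinearMap.ker (P.π.f 0).hom) ≃ₗ[R]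
        ↥(LinearMap.range (P.complex.d 1 0).hom) :=
      LinearEquiv.ofEq _ _ hrange0.symm
    let f : ↥(LinearMap.ker (P.π.f 0).hom) →ₗ[R] ↥(LinearMap.ker φ.hom) :=
      ubar ∘ₗ (eqr.symm.toLinearMap) ∘ₗ inc.toLinearMap
    obtain ⟨v, hv⟩ := wakamatsu_lift R 𝔅 hext φ hcov hX (P.complex.X 0) (P.π.f 0) hπs f
    refine ⟨(ModuleCat.ofHom v : P.complex.X 0 ⟶ K), ?_⟩
    show P.complex.d 1 0 ≫ (ModuleCat.ofHom v : P.complex.X 0 ⟶ K) = u₀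
    ext p : 2
    show v (P.complex.d 1 0 p) = u p
    have hmem : P.complex.d 1 0 p ∈ LinearMap.ker (P.π.f 0).hom := by
      rw [← hrange0]; exact ⟨p, rfl⟩
    have := hv ⟨P.complex.d 1 0 p, hmem⟩
    rw [this]
    show ubar (eqr.symm (inc ⟨P.complex.d 1 0 p, hmem⟩)) = u p
    have hinc : inc ⟨P.complex.d 1 0 p, hmem⟩ = ⟨(P.complex.d 1 0).hom p, LinearMap.mem_range_self _ p⟩ := rfl
    rw [hinc, LinearMap.quotKerEquivRange_symm_apply_image]
    rfl
  have hzero : IsZero (((Ext R (ModuleCat.{u} R) 1).obj (op X)).obj K) :=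
    (((HomologicalComplex.exactAt_iff_isZero_homology _ _).1 hexact)).of_iso (P.isoExt 1 K)
  show Subsingleton _
  have h0 : 𝟙 (((Ext R (ModuleCat.{u} R) 1).obj (op X)).obj K) = 0 := hzero.eq_of_src _ _
  refine ⟨fun a b => ?_⟩
  have ha : a = (𝟙 (((Ext R (ModuleCat.{u} R) 1).obj (op X)).obj K)) a := rfl
  have hb : b = (𝟙 (((Ext R (ModuleCat.{u} R) 1).obj (op X)).obj K)) b := rfl
  rw [ha, hb, h0]
  rfl
end
end

section
/- Suppose M has a 𝔅-cover. Then a 𝔅-precover φ: X → M is a 𝔅-cover if and only if ker φ contains no non-zero direct summand of X. -/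
open CategoryTheory Opposite TensorProduct

universe u

noncomputable section

/-- Suppose `M` has a `𝔅`-cover. Then a `𝔅`-precover `φ : X ⟶ M` is a `𝔅`-cover if
and only if `ker φ` contains no non-zero direct summand of `X`. -/
theorem cover_iff_ker_no_summand
    (R : Type u) [CommRing R] (𝔅 : Set (ModuleCat.{u} R))
    {M X : ModuleCat.{u} R}
    (hcov : ∃ (Y : ModuleCat.{u} R) (ψ : Y ⟶ M), IsCover R 𝔅 ψ)
    (φ : X ⟶ M) (hpre : IsPrecover R 𝔅 φ) :
    IsCover R 𝔅 φ ↔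
      ∀ Z : Submodule R X, Z ≤ LinearMap.ker φ.hom → (∃ W, IsCompl Z W) → Z = ⊥ := by
  constructor
  · rintro ⟨-, hbij⟩ Z hZker ⟨W, hW⟩
    -- projection onto W along Z
    let γ : X ⟶ X := ModuleCat.ofHom (W.subtype.comp (Submodule.projectionOnto W Z hW.symm))
    have hγφ : γ ≫ φ = φ := by
      apply ModuleCat.hom_ext
      apply LinearMap.ext
      intro x
      obtain ⟨z, hz, w, hw, hx⟩ := Submodule.mem_sup.mp
        (show x ∈ Z ⊔ W by rw [hW.sup_eq_top]; trivial)
      subst hx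
      show φ (γ (z + w)) = φ (z + w)
      have h1 : γ (z + w) = w := by
        show (Submodule.projectionOnto W Z hW.symm (z + w) : X) = w
        rw [map_add]
        rw [show z = ((⟨z, hz⟩ : Z) : X) from rfl,
          show w = ((⟨w, hw⟩ : W) : X) from rfl,
          Submodule.linearProjOfIsCompl_apply_right hW.symm ⟨z, hz⟩,
          Submodule.linearProjOfIsCompl_apply_left hW.symm ⟨w, hw⟩]
        simp
      rw [h1, map_add, hZker hz, zero_add]
    have := hbij γ hγφ
    ext z
    simp only [Submodule.mem_bot]
    constructor
    · intro hz
      have h0 : γ z = 0 := by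
        show (Submodule.projectionOnto W Z hW.symm z : X) = 0
        rw [show z = ((⟨z, hz⟩ : Z) : X) from rfl,
          Submodule.linearProjOfIsCompl_apply_right hW.symm]
        simp
      have := this.1 (a₁ := z) (a₂ := 0) (by simpa using h0)
      exact this
    · rintro rfl; exact Z.zero_mem
  · intro hker
    refine ⟨hpre, ?_⟩
    intro u hu
    obtain ⟨Y, ψ, hψ⟩ := hcov
    obtain ⟨f, hf⟩ := hψ.1.2 X hpre.1 φ
    obtain ⟨g, hg⟩ := hpre.2 Y hψ.1.1 ψ
    -- α = f ∘ g : Y → Y bijective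
    have hα : Function.Bijective (g ≫ f) := by
      apply hψ.2
      rw [Category.assoc, hf, hg]
    let α : Y ≃ₗ[R] Y := LinearEquiv.ofBijective (g ≫ f).hom hα
    have hαdef : ∀ y : Y, α y = f (g y) := fun y => rfl
    have hψα : ∀ y : Y, ψ (α.symm y) = ψ y := by
      intro y
      have h1 : ψ (α (α.symm y)) = ψ (α.symm y) := by
        have : ∀ z : Y, ψ (α z) = ψ z := by
          intro z
          rw [hαdef]
          have : φ (g z) = ψ z := congrFun (congrArg (fun h => DFunLike.coe (ModuleCat.Hom.hom h)) hg) z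
          have h2 : ψ (f (g z)) = φ (g z) := congrFun (congrArg (fun h => DFunLike.coe (ModuleCat.Hom.hom h)) hf) (g z)
          rw [h2, this]
        exact this _
      rw [LinearEquiv.apply_symm_apply] at h1
      exact h1.symm
    -- γ = g ∘ α⁻¹ ∘ f : X → X, idempotent, φ ∘ γ = φ
    let γ : X ⟶ X := ModuleCat.ofHom ((g.hom : Y →ₗ[R] X).comp ((α.symm : Y →ₗ[R] Y).comp (f.hom : X →ₗ[R] Y)))
    have hγ : ∀ x : X, γ x = g (α.symm (f x)) := fun x => rfl
    have hφf : ∀ x : X, ψ (f x) = φ x := fun x => congrFun (congrArg (fun h => DFunLike.coe (ModuleCat.Hom.hom h)) hf) x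
    have hφg : ∀ y : Y, φ (g y) = ψ y := fun y => congrFun (congrArg (fun h => DFunLike.coe (ModuleCat.Hom.hom h)) hg) y
    have hφγ : ∀ x : X, φ (γ x) = φ x := by
      intro x
      rw [hγ, hφg, hψα, hφf]
    have hidem : ∀ x : X, γ (γ x) = γ x := by
      intro x
      rw [hγ, hγ]
      congr 1
      have : f (g (α.symm (f x))) = α (α.symm (f x)) := (hαdef _).symm
      rw [this, LinearEquiv.apply_symm_apply]
    -- ker γ is a direct summand contained in ker φ
    have hcompl : IsCompl (LinearMap.ker (γ.hom : X →ₗ[R] X)) (LinearMap.range (γ.hom : X →ₗ[R] X)) := by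
      constructor
      · rw [disjoint_iff]
        ext x
        simp only [Submodule.mem_inf, LinearMap.mem_ker, LinearMap.mem_range,
          Submodule.mem_bot]
        constructor
        · rintro ⟨h0, y, rfl⟩
          rw [← hidem y, h0]
        · rintro rfl
          exact ⟨by simp, 0, by simp⟩
      · rw [codisjoint_iff]
        ext x
        simp only [Submodule.mem_top, iff_true]
        have : x = (x - γ x) + γ x := by abel
        rw [this]
        exact Submodule.add_mem_sup (by simp [LinearMap.mem_ker, map_sub, hidem])
          (LinearMap.mem_range_self _ _)
    have hkerγ : LinearMap.ker (γ.hom : X →ₗ[R] X) = ⊥ := by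
      apply hker
      · intro x hx
        simp only [LinearMap.mem_ker] at hx ⊢
        rw [← hφγ x, hx, map_zero]
      · exact ⟨_, hcompl⟩
    -- γ injective idempotent ⇒ γ = id, so g ∘ α⁻¹ ∘ f = id
    have hγinj : Function.Injective (γ.hom : X →ₗ[R] X) :=
      LinearMap.ker_eq_bot (f := (γ.hom : X →ₗ[R] X)) |>.mp hkerγ
    have hγid : ∀ x : X, γ x = x := by
      intro x
      exact hγinj (hidem x)
    have hfinj : Function.Injective f := by
      intro a b hab
      have := hγid a
      rw [hγ, hab, ← hγ, hγid] at this
      exact this.symm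
    have hgsurj : Function.Surjective g := by
      intro x
      exact ⟨α.symm (f x), (hγid x)⟩
    -- v = f ∘ u ∘ g : Y → Y is bijective since ψ ∘ v = ψ
    have hv : Function.Bijective ((g ≫ u) ≫ f) := by
      apply hψ.2
      rw [Category.assoc, hf]
      rw [Category.assoc] at *
      rw [show u ≫ φ = φ from hu, hg]
    have hvdef : ∀ y : Y, ((g ≫ u) ≫ f) y = f (u (g y)) := fun y => rfl
    -- f surjective: since f ∘ (u ∘ g) surjective
    have hfsurj : Function.Surjective f := by
      intro y
      obtain ⟨z, hz⟩ := hv.2 y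
      exact ⟨u (g z), hz⟩
    have hfbij : Function.Bijective f := ⟨hfinj, hfsurj⟩
    -- u ∘ g bijective
    have hug : Function.Bijective (fun y => u (g y)) := by
      constructor
      · intro a b hab
        exact hv.1 (a₁ := a) (a₂ := b) (by simp only [hvdef]; exact congrArg f hab)
      · intro x
        obtain ⟨y, hy⟩ := hv.2 (f x)
        exact ⟨y, hfinj hy⟩
    have hginj : Function.Injective g := by
      intro a b hab
      exact hug.1 (a₁ := a) (a₂ := b) (congrArg u hab)
    have hgbij : Function.Bijective g := ⟨hginj, hgsurj⟩
    -- u = (u ∘ g) ∘ g⁻¹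
    constructor
    · intro a b hab
      obtain ⟨a', rfl⟩ := hgsurj a
      obtain ⟨b', rfl⟩ := hgsurj b
      exact congrArg g (hug.1 hab)
    · intro x
      obtain ⟨y, hy⟩ := hug.2 x
      exact ⟨g y, hy⟩
end
end
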